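/- For every odd n ≥ 1, the function f(S) = max(0, |S| − (n−1)/2) is at distance at least (n−1)/8 from every submodular function on 2^[n]. -/

import Mathlib

open Finset
open Fin.NatCast Fin.CommRing

section aux

variable {n : ℕ} [NeZero n]

def Itv (i : Fin n) (j : ℕ) : Finset (Fin n) :=
  (Finset.range j).image (fun t : ℕ => i + (t : Fin n))

lemma mem_Itv {i : Fin n} {j : ℕ} {x : Fin n} :
    x ∈ Itv i j ↔ ∃ t, t < j ∧ x = i + (t : Fin n) := by
  simp [Itv, eq_comm]

lemma card_Itv (i : Fin n) {j : ℕ} (hj : j ≤ n) : (Itv i j).card = j := by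
  rw [Itv, Finset.card_image_of_injOn, Finset.card_range]
  intro a ha b hb hab
  simp only [Finset.coe_range, Set.mem_Iio] at ha hb
  have h2 : ((a : ℕ) : Fin n) = ((b : ℕ) : Fin n) := add_left_cancel hab
  have h3 := congrArg Fin.val h2
  rwa [Fin.val_natCast, Fin.val_natCast, Nat.mod_eq_of_lt (lt_of_lt_of_le ha hj),
    Nat.mod_eq_of_lt (lt_of_lt_of_le hb hj)] at h3

lemma Itv_union (i : Fin n) {j : ℕ} (hj : 1 ≤ j) :
    Itv i j ∪ Itv (i + 1) j = Itv i (j + 1) := by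
  ext x
  simp only [Finset.mem_union, mem_Itv]
  constructor
  · rintro (⟨t, ht, rfl⟩ | ⟨t, ht, rfl⟩)
    · exact ⟨t, by omega, rfl⟩
    · refine ⟨t + 1, by omega, ?_⟩
      push_cast
      ring
  · rintro ⟨t, ht, rfl⟩
    by_cases h : t < j
    · exact Or.inl ⟨t, h, rfl⟩
    · have ht' : t = j := by omega
      subst ht'
      refine Or.inr ⟨t - 1, by omega, ?_⟩
      have hc : ((t : ℕ) : Fin n) = 1 + ((t - 1 : ℕ) : Fin n) := by
        conv_lhs => rw [show t = 1 + (t - 1) by omega]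
        push_cast
        ring
      rw [hc]; ring

lemma Itv_inter (i : Fin n) {j : ℕ} (hj : 1 ≤ j) (hjn : j < n) :
    Itv i j ∩ Itv (i + 1) j = Itv (i + 1) (j - 1) := by
  ext x
  simp only [Finset.mem_inter, mem_Itv]
  constructor
  · rintro ⟨⟨t, ht, rfl⟩, ⟨s, hs, hx⟩⟩
    have hc : ((t : ℕ) : Fin n) = ((s + 1 : ℕ) : Fin n) := by
      have h1 : i + (t : Fin n) = i + ((s + 1 : ℕ) : Fin n) := by
        rw [hx]; push_cast; ring
      exact add_left_cancel h1
    have hts : t = s + 1 := by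
      have h3 := congrArg Fin.val hc
      rwa [Fin.val_natCast, Fin.val_natCast, Nat.mod_eq_of_lt (by omega),
        Nat.mod_eq_of_lt (by omega)] at h3
    exact ⟨s, by omega, hx⟩
  · rintro ⟨s, hs, rfl⟩
    refine ⟨⟨s + 1, by omega, ?_⟩, ⟨s, by omega, rfl⟩⟩
    push_cast
    ring

lemma Itv_zero (i : Fin n) : Itv i 0 = ∅ := by simp [Itv]

lemma Itv_top (i : Fin n) : Itv i n = Finset.univ := by
  apply Finset.eq_univ_of_card
  rw [card_Itv i le_rfl, Fintype.card_fin]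

end aux

lemma interp_lemma (n k : ℕ) (h : ℕ → ℝ) (hk : k ≤ n)
    (hmid : ∀ j, j + 2 ≤ n → h (j + 2) + h j ≤ 2 * h (j + 1)) :
    ((n : ℝ) - k) * h 0 + k * h n ≤ n * h k := by
  rcases Nat.eq_zero_or_pos k with rfl | hk1
  · simp
  set d : ℕ → ℝ := fun j => h (j + 1) - h j with hd
  have hanti : ∀ a b, a ≤ b → b + 1 ≤ n → d b ≤ d a := by
    intro a b hab hbn
    induction b, hab using Nat.le_induction with
    | base => exact le_rfl
    | succ m hm ih =>
      have h1 : d (m + 1) ≤ d m := by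
        have := hmid m (by omega)
        show h (m + 2) - h (m + 1) ≤ h (m + 1) - h m
        linarith
      exact le_trans h1 (ih (by omega))
  have hsum1 : (k : ℝ) * d (k - 1) ≤ ∑ j ∈ Finset.range k, d j := by
    calc (k : ℝ) * d (k - 1) = ∑ _j ∈ Finset.range k, d (k - 1) := by
          rw [Finset.sum_const, Finset.card_range, nsmul_eq_mul]
      _ ≤ ∑ j ∈ Finset.range k, d j := by
          apply Finset.sum_le_sum
          intro j hj
          simp only [Finset.mem_range] at hj
          exact hanti j (k - 1) (by omega) (by omega)
  have hsum2 : ∑ j ∈ Finset.Ico k n, d j ≤ ((n : ℝ) - k) * d (k - 1) := by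
    calc ∑ j ∈ Finset.Ico k n, d j ≤ ∑ _j ∈ Finset.Ico k n, d (k - 1) := by
          apply Finset.sum_le_sum
          intro j hj
          simp only [Finset.mem_Ico] at hj
          exact hanti (k - 1) j (by omega) (by omega)
      _ = ((n : ℝ) - k) * d (k - 1) := by
          rw [Finset.sum_const, Nat.card_Ico, nsmul_eq_mul, Nat.cast_sub hk]
  have ht1 : ∑ j ∈ Finset.range k, d j = h k - h 0 := Finset.sum_range_sub h k
  have ht2 : ∑ j ∈ Finset.Ico k n, d j = h n - h k := by
    rw [Finset.sum_Ico_eq_sub _ hk, Finset.sum_range_sub h, Finset.sum_range_sub h]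
    ring
  rw [ht1] at hsum1
  rw [ht2] at hsum2
  have hknn : (0:ℝ) ≤ (k : ℝ) := Nat.cast_nonneg k
  have hnk : (0:ℝ) ≤ (n : ℝ) - k := by
    have : (k:ℝ) ≤ n := Nat.cast_le.mpr hk
    linarith
  nlinarith [mul_le_mul_of_nonneg_left hsum2 hknn, mul_le_mul_of_nonneg_left hsum1 hnk]

theorem stmt_13 (n : ℕ) (hn : 1 ≤ n) (hodd : Odd n)
    (f : Finset (Fin n) → ℝ)
    (hf : ∀ S : Finset (Fin n), f S = max 0 ((S.card : ℝ) - ((n : ℝ) - 1) / 2)) :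
    ∀ g : Finset (Fin n) → ℝ,
      (∀ A B, g A + g B ≥ g (A ∪ B) + g (A ∩ B)) →
      ∃ S, |f S - g S| ≥ ((n : ℝ) - 1) / 8 := by
  intro g hg
  by_contra hcon
  push_neg at hcon
  haveI : NeZero n := ⟨by omega⟩
  obtain ⟨m, hm⟩ := hodd
  set ε : ℝ := ((n : ℝ) - 1) / 8 with hε
  have hnR : (n : ℝ) = 2 * m + 1 := by rw [hm]; push_cast; ring
  have hεm : ε = (m : ℝ) / 4 := by rw [hε, hnR]; ring
  have hmR : (0:ℝ) ≤ (m : ℝ) := Nat.cast_nonneg m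
  -- bounds on g from bounds on f
  have hgb : ∀ S : Finset (Fin n), f S - ε < g S ∧ g S < f S + ε := by
    intro S
    have := hcon S
    rw [abs_sub_lt_iff] at this
    constructor <;> linarith [this.1, this.2]
  set H : ℕ → ℝ := fun j => ∑ i : Fin n, g (Itv i j) with hH
  have shift : ∀ (F : Finset (Fin n) → ℝ) (j : ℕ),
      ∑ i : Fin n, F (Itv (i + 1) j) = ∑ i : Fin n, F (Itv i j) := by
    intro F j
    exact Equiv.sum_comp (Equiv.addRight (1 : Fin n)) (fun i => F (Itv i j))
  have hmid : ∀ j, j + 2 ≤ n → H (j + 2) + H j ≤ 2 * H (j + 1) := by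
    intro j hj
    have key : ∀ i : Fin n,
        g (Itv i (j + 2)) + g (Itv (i + 1) j) ≤ g (Itv i (j + 1)) + g (Itv (i + 1) (j + 1)) := by
      intro i
      have h1 := hg (Itv i (j + 1)) (Itv (i + 1) (j + 1))
      rw [Itv_union i (by omega), Itv_inter i (by omega) (by omega)] at h1
      simp only [Nat.add_sub_cancel] at h1
      linarith
    have hs : ∑ i : Fin n, (g (Itv i (j + 2)) + g (Itv (i + 1) j)) ≤
        ∑ i : Fin n, (g (Itv i (j + 1)) + g (Itv (i + 1) (j + 1))) :=
      Finset.sum_le_sum (fun i _ => key i)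
    rw [Finset.sum_add_distrib, Finset.sum_add_distrib, shift g j, shift g (j + 1)] at hs
    simp only [hH]
    linarith
  -- value computations
  have hfval : ∀ (i : Fin n) (j : ℕ), j ≤ n →
      f (Itv i j) = max 0 ((j : ℝ) - (m : ℝ)) := by
    intro i j hj
    rw [hf, card_Itv i hj, hnR]
    norm_num
  have hHm : H m < (n : ℝ) * ε := by
    have hmn : m ≤ n := by omega
    have hlt : ∀ i : Fin n, g (Itv i m) < ε := by
      intro i
      have h1 := (hgb (Itv i m)).2
      have h2 : f (Itv i m) = 0 := by
        rw [hfval i m hmn]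
        simp
      rw [h2] at h1; linarith
    calc H m < ∑ _i : Fin n, ε := by
          apply Finset.sum_lt_sum_of_nonempty Finset.univ_nonempty (fun i _ => hlt i)
      _ = (n : ℝ) * ε := by
          rw [Finset.sum_const, Finset.card_univ, Fintype.card_fin, nsmul_eq_mul]
  have hH0 : -((n : ℝ) * ε) ≤ H 0 := by
    have hge : ∀ i : Fin n, -ε ≤ g (Itv i 0) := by
      intro i
      have h1 := (hgb (Itv i 0)).1
      have h2 : f (Itv i 0) = 0 := by
        rw [hfval i 0 (by omega)]
        simp [hmR]
      rw [h2] at h1; linarith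
    calc -((n : ℝ) * ε) = ∑ _i : Fin n, (-ε) := by
          rw [Finset.sum_const, Finset.card_univ, Fintype.card_fin, nsmul_eq_mul]; ring
      _ ≤ H 0 := Finset.sum_le_sum (fun i _ => hge i)
  have hHn : (n : ℝ) * ((m : ℝ) + 1 - ε) ≤ H n := by
    have hge : ∀ i : Fin n, (m : ℝ) + 1 - ε ≤ g (Itv i n) := by
      intro i
      have h1 := (hgb (Itv i n)).1
      have h2 : f (Itv i n) = (m : ℝ) + 1 := by
        rw [hfval i n le_rfl, hnR]
        rw [max_eq_right] <;> linarith
      rw [h2] at h1; linarith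
    calc (n : ℝ) * ((m : ℝ) + 1 - ε) = ∑ _i : Fin n, ((m : ℝ) + 1 - ε) := by
          rw [Finset.sum_const, Finset.card_univ, Fintype.card_fin, nsmul_eq_mul]
      _ ≤ H n := Finset.sum_le_sum (fun i _ => hge i)
  have hinterp := interp_lemma n m H (by omega) hmid
  have hnpos : (0:ℝ) < (n : ℝ) := by rw [hnR]; linarith
  have hbig : ((n:ℝ) - m) * (-((n : ℝ) * ε)) + (m:ℝ) * ((n : ℝ) * ((m : ℝ) + 1 - ε))
      ≤ (n : ℝ) * H m := by
    have hnmk : (0:ℝ) ≤ (n:ℝ) - m := by rw [hnR]; linarith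
    have t1 : ((n:ℝ) - m) * (-((n : ℝ) * ε)) ≤ ((n:ℝ) - m) * H 0 :=
      mul_le_mul_of_nonneg_left hH0 hnmk
    have t2 : (m:ℝ) * ((n : ℝ) * ((m : ℝ) + 1 - ε)) ≤ (m:ℝ) * H n :=
      mul_le_mul_of_nonneg_left hHn hmR
    linarith
  have hsmall : (n : ℝ) * H m < (n : ℝ) * ((n : ℝ) * ε) :=
    mul_lt_mul_of_pos_left hHm hnpos
  rw [hnR, hεm] at hbig hsmall
  nlinarith [hbig, hsmall, hmR]
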